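/- Let 1 ≤ p < ∞ and let f : ℝ → ℝ be 2π-periodic and Henstock–Kurzweil integrable on [−π,π], with Poisson integral u_r(θ) = P[f](re^{iθ}). Then ‖u_r‖_p = o(1/(1−r)) as r → 1⁻; that is, (1−r)·(∫_{−π}^{π} |u_r(θ)|^p dθ)^{1/p} → 0 as r → 1⁻. -/

import Mathlib

open Real Filter MeasureTheory Set Topology

noncomputable section

/-- `f` has Henstock–Kurzweil integral `I` on `[a,b]`: for every `ε > 0` there is a
gauge `δ` such that every `δ`-fine tagged partition of `[a,b]` has Riemann sum
within `ε` of `I`. -/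
def HKIntegralEq (f : ℝ → ℝ) (a b I : ℝ) : Prop :=
  ∀ ε > 0, ∃ δ : ℝ → ℝ, (∀ x, 0 < δ x) ∧
    ∀ (n : ℕ) (t ξ : ℕ → ℝ),
      t 0 = a → t n = b →
      (∀ i < n, t i ≤ t (i + 1)) →
      (∀ i < n, t i ≤ ξ i ∧ ξ i ≤ t (i + 1)) →
      (∀ i < n, ξ i - δ (ξ i) < t i ∧ t (i + 1) < ξ i + δ (ξ i)) →
      |(∑ i ∈ Finset.range n, f (ξ i) * (t (i + 1) - t i)) - I| < ε

/-- `f` is Henstock–Kurzweil integrable on `[a,b]`. -/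
def HKIntegrable (f : ℝ → ℝ) (a b : ℝ) : Prop := ∃ I, HKIntegralEq f a b I

open Classical in
/-- The Henstock–Kurzweil integral of `f` on `[a,b]` (junk value `0` if not integrable). -/
def hkIntegral (f : ℝ → ℝ) (a b : ℝ) : ℝ :=
  if h : HKIntegrable f a b then h.choose else 0

namespace HKAux

def RS (f : ℝ → ℝ) (n : ℕ) (t ξ : ℕ → ℝ) : ℝ :=
  ∑ i ∈ Finset.range n, f (ξ i) * (t (i + 1) - t i)

structure TP (a b : ℝ) (δ : ℝ → ℝ) (n : ℕ) (t ξ : ℕ → ℝ) : Prop where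
  h0 : t 0 = a
  hn : t n = b
  mono : ∀ i < n, t i ≤ t (i + 1)
  tag : ∀ i < n, t i ≤ ξ i ∧ ξ i ≤ t (i + 1)
  fine : ∀ i < n, ξ i - δ (ξ i) < t i ∧ t (i + 1) < ξ i + δ (ξ i)

theorem hkIntegralEq_iff {f : ℝ → ℝ} {a b I : ℝ} :
    HKIntegralEq f a b I ↔ ∀ ε > 0, ∃ δ : ℝ → ℝ, (∀ x, 0 < δ x) ∧
      ∀ n t ξ, TP a b δ n t ξ → |RS f n t ξ - I| < ε := by
  constructor
  · intro H ε hε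
    obtain ⟨δ, hδ, H⟩ := H ε hε
    exact ⟨δ, hδ, fun n t ξ h => H n t ξ h.h0 h.hn h.mono h.tag h.fine⟩
  · intro H ε hε
    obtain ⟨δ, hδ, H⟩ := H ε hε
    exact ⟨δ, hδ, fun n t ξ h1 h2 h3 h4 h5 => H n t ξ ⟨h1, h2, h3, h4, h5⟩⟩

theorem TP.mono_gauge {a b : ℝ} {δ δ' : ℝ → ℝ} {n t ξ} (h : TP a b δ n t ξ)
    (hle : ∀ x, δ x ≤ δ' x) : TP a b δ' n t ξ :=
  ⟨h.h0, h.hn, h.mono, h.tag, fun i hi => ⟨by have := (h.fine i hi).1; have := hle (ξ i); linarith,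
    by have := (h.fine i hi).2; have := hle (ξ i); linarith⟩⟩

theorem TP.t_le {a b : ℝ} {δ : ℝ → ℝ} {n t ξ} (h : TP a b δ n t ξ) {i j : ℕ}
    (hij : i ≤ j) (hj : j ≤ n) : t i ≤ t j := by
  induction j with
  | zero => simp at hij; simp [hij]
  | succ k ih =>
    rcases Nat.eq_or_lt_of_le hij with rfl | hlt
    · exact le_rfl
    · exact (ih (Nat.lt_succ_iff.mp hlt) (le_trans (Nat.le_succ k) hj)).trans
        (h.mono k (Nat.lt_of_lt_of_le (Nat.lt_succ_self k) hj))

theorem TP.t_mem {a b : ℝ} {δ : ℝ → ℝ} {n t ξ} (h : TP a b δ n t ξ) {i : ℕ}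
    (hi : i ≤ n) : a ≤ t i ∧ t i ≤ b := by
  constructor
  · rw [← h.h0]; exact h.t_le (Nat.zero_le i) hi
  · rw [← h.hn]; exact h.t_le hi le_rfl

theorem TP.tag_mem {a b : ℝ} {δ : ℝ → ℝ} {n t ξ} (h : TP a b δ n t ξ) {i : ℕ}
    (hi : i < n) : a ≤ ξ i ∧ ξ i ≤ b :=
  ⟨(h.t_mem hi.le).1.trans (h.tag i hi).1,
   (h.tag i hi).2.trans (h.t_mem hi).2⟩

theorem TP.tag_mono {a b : ℝ} {δ : ℝ → ℝ} {n t ξ} (h : TP a b δ n t ξ) {i j : ℕ}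
    (hij : i < j) (hj : j < n) : ξ i ≤ ξ j :=
  ((h.tag i (hij.trans hj)).2.trans (h.t_le hij hj.le)).trans (h.tag j hj).1

theorem TP.self (f : ℝ → ℝ) (a : ℝ) {δ : ℝ → ℝ} : TP a a δ 0 (fun _ => a) (fun _ => a) :=
  ⟨rfl, rfl, fun i hi => absurd hi (Nat.not_lt_zero i), fun i hi => absurd hi (Nat.not_lt_zero i),
   fun i hi => absurd hi (Nat.not_lt_zero i)⟩

theorem TP.extend {a x : ℝ} {δ : ℝ → ℝ} {n t ξ} (h : TP a x δ n t ξ) {y τ : ℝ}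
    (hxy : x ≤ y) (h1 : x ≤ τ) (h2 : τ ≤ y) (h3 : τ - δ τ < x) (h4 : y < τ + δ τ) :
    TP a y δ (n+1) (fun i => if i ≤ n then t i else y) (fun i => if i < n then ξ i else τ) := by
  have hx := h.hn
  refine ⟨by simp [h.h0], by simp, ?_, ?_, ?_⟩
  · intro i hi
    rcases Nat.lt_or_ge i n with hin | hin
    · simp only [if_pos hin.le, if_pos (Nat.succ_le_of_lt hin)]
      exact h.mono i hin
    · have hin' : i = n := by omega
      subst hin'
      simp only [if_pos le_rfl, if_neg (by omega : ¬ i + 1 ≤ i)]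
      rw [hx]; exact hxy
  · intro i hi
    rcases Nat.lt_or_ge i n with hin | hin
    · simp only [if_pos hin.le, if_pos (Nat.succ_le_of_lt hin), if_pos hin]
      exact h.tag i hin
    · have hin' : i = n := by omega
      subst hin'
      simp only [if_pos le_rfl, if_neg (by omega : ¬ i + 1 ≤ i), if_neg (lt_irrefl i)]
      rw [hx]; exact ⟨h1, h2⟩
  · intro i hi
    rcases Nat.lt_or_ge i n with hin | hin
    · simp only [if_pos hin.le, if_pos (Nat.succ_le_of_lt hin), if_pos hin]
      exact h.fine i hin
    · have hin' : i = n := by omega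
      subst hin'
      simp only [if_pos le_rfl, if_neg (by omega : ¬ i + 1 ≤ i), if_neg (lt_irrefl i)]
      rw [hx]; exact ⟨h3, h4⟩

theorem cousin {δ : ℝ → ℝ} (hδ : ∀ x, 0 < δ x) {a b : ℝ} (hab : a ≤ b) :
    ∃ n t ξ, TP a b δ n t ξ := by
  set S := {x | x ∈ Icc a b ∧ ∃ n t ξ, TP a x δ n t ξ} with hS
  have haS : a ∈ S := ⟨⟨le_rfl, hab⟩, 0, _, _, TP.self (fun _ => 0) a⟩
  have hne : S.Nonempty := ⟨a, haS⟩
  have hbdd : BddAbove S := ⟨b, fun x hx => hx.1.2⟩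
  set c := sSup S with hc
  have hac : a ≤ c := le_csSup hbdd haS
  have hcb : c ≤ b := csSup_le hne (fun x hx => hx.1.2)
  obtain ⟨x, hxS, hxc⟩ := exists_lt_of_lt_csSup hne (by linarith [hδ c] : c - δ c < sSup S)
  have hxlec : x ≤ c := le_csSup hbdd hxS
  obtain ⟨nx, tx, ξx, hTPx⟩ := hxS.2
  have hcP : ∃ n t ξ, TP a c δ n t ξ :=
    ⟨nx + 1, _, _, hTPx.extend hxlec hxlec le_rfl hxc (by linarith [hδ c])⟩
  rcases eq_or_lt_of_le hcb with heq | hlt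
  · rw [← heq]; exact hcP
  · exfalso
    set d := min b (c + δ c / 2) with hd
    have hdc : c < d := lt_min hlt (by linarith [hδ c])
    obtain ⟨n, t, ξ, hTP⟩ := hcP
    have hdS : d ∈ S := ⟨⟨hac.trans hdc.le, min_le_left _ _⟩, n + 1, _, _,
      hTP.extend hdc.le le_rfl hdc.le (by linarith [hδ c])
        (by have : d ≤ c + δ c / 2 := min_le_right _ _; linarith [hδ c])⟩
    have := le_csSup hbdd hdS
    linarith

end HKAux


namespace HKAux

def catt (n : ℕ) (t s : ℕ → ℝ) : ℕ → ℝ := fun i => if i ≤ n then t i else s (i - n)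
def catx (n : ℕ) (ξ σ : ℕ → ℝ) : ℕ → ℝ := fun i => if i < n then ξ i else σ (i - n)

theorem TP.concat {a b c : ℝ} {δ : ℝ → ℝ} {n m : ℕ} {t ξ s σ : ℕ → ℝ}
    (h1 : TP a c δ n t ξ) (h2 : TP c b δ m s σ) :
    TP a b δ (n + m) (catt n t s) (catx n ξ σ) := by
  have hts : t n = s 0 := h1.hn.trans h2.h0.symm
  have hT : ∀ j : ℕ, catt n t s (n + j) = s j := by
    intro j
    rcases Nat.eq_zero_or_pos j with rfl | hj
    · simp [catt, hts]
    · simp only [catt, if_neg (by omega : ¬ n + j ≤ n)]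
      congr 1; omega
  have hT1 : ∀ i : ℕ, i ≤ n → catt n t s i = t i := fun i hi => by simp [catt, hi]
  refine ⟨by simp [catt, h1.h0], by rw [hT m, h2.hn], ?_, ?_, ?_⟩
  · intro i hi
    rcases Nat.lt_or_ge i n with hin | hin
    · rw [hT1 i hin.le, hT1 (i+1) hin]; exact h1.mono i hin
    · obtain ⟨j, rfl⟩ := Nat.exists_eq_add_of_le hin
      have hjm : j < m := by omega
      rw [hT j, show n + j + 1 = n + (j+1) by omega, hT (j+1)]
      exact h2.mono j hjm
  · intro i hi
    rcases Nat.lt_or_ge i n with hin | hin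
    · rw [hT1 i hin.le, hT1 (i+1) hin]
      simp only [catx, if_pos hin]
      exact h1.tag i hin
    · obtain ⟨j, rfl⟩ := Nat.exists_eq_add_of_le hin
      have hjm : j < m := by omega
      rw [hT j, show n + j + 1 = n + (j+1) by omega, hT (j+1)]
      simp only [catx, if_neg (by omega : ¬ n + j < n), Nat.add_sub_cancel_left]
      exact h2.tag j hjm
  · intro i hi
    rcases Nat.lt_or_ge i n with hin | hin
    · rw [hT1 i hin.le, hT1 (i+1) hin]
      simp only [catx, if_pos hin]
      exact h1.fine i hin
    · obtain ⟨j, rfl⟩ := Nat.exists_eq_add_of_le hin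
      have hjm : j < m := by omega
      rw [hT j, show n + j + 1 = n + (j+1) by omega, hT (j+1)]
      simp only [catx, if_neg (by omega : ¬ n + j < n), Nat.add_sub_cancel_left]
      exact h2.fine j hjm

theorem RS_cat_left (f : ℝ → ℝ) {n : ℕ} {t ξ s σ : ℕ → ℝ} {k : ℕ} (hk : k ≤ n) :
    RS f k (catt n t s) (catx n ξ σ) = RS f k t ξ := by
  unfold RS
  refine Finset.sum_congr rfl (fun i hi => ?_)
  rw [Finset.mem_range] at hi
  have h1 : i < n := lt_of_lt_of_le hi hk
  simp only [catt, catx, if_pos h1, if_pos h1.le, if_pos (Nat.succ_le_of_lt h1)]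

theorem RS_concat (f : ℝ → ℝ) {a b c : ℝ} {δ : ℝ → ℝ} {n m : ℕ} {t ξ s σ : ℕ → ℝ}
    (h1 : TP a c δ n t ξ) (h2 : TP c b δ m s σ) :
    RS f (n + m) (catt n t s) (catx n ξ σ) = RS f n t ξ + RS f m s σ := by
  have hts : t n = s 0 := h1.hn.trans h2.h0.symm
  have hT : ∀ j : ℕ, catt n t s (n + j) = s j := by
    intro j
    rcases Nat.eq_zero_or_pos j with rfl | hj
    · simp [catt, hts]
    · simp only [catt, if_neg (by omega : ¬ n + j ≤ n)]
      congr 1; omega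
  unfold RS
  rw [Finset.sum_range_add]
  congr 1
  · exact RS_cat_left f le_rfl
  · refine Finset.sum_congr rfl (fun j hj => ?_)
    rw [Finset.mem_range] at hj
    rw [hT j, show n + j + 1 = n + (j+1) by omega, hT (j+1)]
    simp only [catx, if_neg (by omega : ¬ n + j < n), Nat.add_sub_cancel_left]

theorem TP.prefix {a b : ℝ} {δ : ℝ → ℝ} {n t ξ} (h : TP a b δ n t ξ) {k : ℕ} (hk : k ≤ n) :
    TP a (t k) δ k t ξ :=
  ⟨h.h0, rfl, fun i hi => h.mono i (lt_of_lt_of_le hi hk),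
   fun i hi => h.tag i (lt_of_lt_of_le hi hk), fun i hi => h.fine i (lt_of_lt_of_le hi hk)⟩

def single (c d : ℝ) : ℕ → ℝ := fun i => if i = 0 then c else d

theorem TP.single_tp {c d τ : ℝ} {δ : ℝ → ℝ} (hcd : c ≤ d) (h1 : c ≤ τ) (h2 : τ ≤ d)
    (h3 : τ - δ τ < c) (h4 : d < τ + δ τ) : TP c d δ 1 (single c d) (fun _ => τ) := by
  refine ⟨rfl, rfl, ?_, ?_, ?_⟩ <;> intro i hi <;>
    · have : i = 0 := by omega
      subst this
      simp only [single, if_pos rfl, if_neg (one_ne_zero)]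
      first
      | exact hcd
      | exact ⟨h1, h2⟩
      | exact ⟨h3, h4⟩

theorem RS_single (f : ℝ → ℝ) (c d τ : ℝ) :
    RS f 1 (single c d) (fun _ => τ) = f τ * (d - c) := by
  simp [RS, single]

theorem hk_unique {f : ℝ → ℝ} {a b I I' : ℝ} (hab : a ≤ b)
    (h1 : HKIntegralEq f a b I) (h2 : HKIntegralEq f a b I') : I = I' := by
  by_contra hne
  have hpos : 0 < |I - I'| / 2 := by
    have : I - I' ≠ 0 := sub_ne_zero.mpr hne
    have := abs_pos.mpr this
    linarith
  obtain ⟨δ1, hδ1, H1⟩ := hkIntegralEq_iff.mp h1 _ hpos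
  obtain ⟨δ2, hδ2, H2⟩ := hkIntegralEq_iff.mp h2 _ hpos
  obtain ⟨n, t, ξ, hTP⟩ := cousin (δ := fun x => min (δ1 x) (δ2 x))
    (fun x => lt_min (hδ1 x) (hδ2 x)) hab
  have e1 := H1 n t ξ (hTP.mono_gauge (fun x => min_le_left _ _))
  have e2 := H2 n t ξ (hTP.mono_gauge (fun x => min_le_right _ _))
  have : |I - I'| ≤ |RS f n t ξ - I| + |RS f n t ξ - I'| := by
    have := abs_sub_le I (RS f n t ξ) I'
    rwa [abs_sub_comm I (RS f n t ξ)] at this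
  linarith

theorem hkIntegral_spec {f : ℝ → ℝ} {a b : ℝ} (h : HKIntegrable f a b) :
    HKIntegralEq f a b (hkIntegral f a b) := by
  rw [hkIntegral, dif_pos h]
  exact h.choose_spec

theorem hk_eq {f : ℝ → ℝ} {a b I : ℝ} (hab : a ≤ b)
    (h : HKIntegralEq f a b I) : hkIntegral f a b = I :=
  hk_unique hab (hkIntegral_spec ⟨I, h⟩) h

theorem hk_add {f g : ℝ → ℝ} {a b I J : ℝ} (hf : HKIntegralEq f a b I)
    (hg : HKIntegralEq g a b J) : HKIntegralEq (fun x => f x + g x) a b (I + J) := by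
  rw [hkIntegralEq_iff]
  intro ε hε
  obtain ⟨δ1, hδ1, H1⟩ := hkIntegralEq_iff.mp hf (ε/2) (by linarith)
  obtain ⟨δ2, hδ2, H2⟩ := hkIntegralEq_iff.mp hg (ε/2) (by linarith)
  refine ⟨fun x => min (δ1 x) (δ2 x), fun x => lt_min (hδ1 x) (hδ2 x), fun n t ξ hTP => ?_⟩
  have e1 := H1 n t ξ (hTP.mono_gauge (fun x => min_le_left _ _))
  have e2 := H2 n t ξ (hTP.mono_gauge (fun x => min_le_right _ _))
  have hRS : RS (fun x => f x + g x) n t ξ = RS f n t ξ + RS g n t ξ := by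
    unfold RS
    rw [← Finset.sum_add_distrib]
    exact Finset.sum_congr rfl (fun i _ => by ring)
  rw [hRS]
  calc |RS f n t ξ + RS g n t ξ - (I + J)|
      = |(RS f n t ξ - I) + (RS g n t ξ - J)| := by ring_nf
    _ ≤ |RS f n t ξ - I| + |RS g n t ξ - J| := abs_add_le _ _
    _ < ε := by linarith

theorem hk_neg {f : ℝ → ℝ} {a b I : ℝ} (hf : HKIntegralEq f a b I) :
    HKIntegralEq (fun x => -f x) a b (-I) := by
  rw [hkIntegralEq_iff]
  intro ε hε
  obtain ⟨δ1, hδ1, H1⟩ := hkIntegralEq_iff.mp hf ε hε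
  refine ⟨δ1, hδ1, fun n t ξ hTP => ?_⟩
  have hRS : RS (fun x => -f x) n t ξ = -RS f n t ξ := by
    unfold RS
    rw [← Finset.sum_neg_distrib]
    exact Finset.sum_congr rfl (fun i _ => by ring)
  rw [hRS]
  have := H1 n t ξ hTP
  rwa [show -RS f n t ξ - -I = -(RS f n t ξ - I) by ring, abs_neg]

theorem hk_sub {f g : ℝ → ℝ} {a b I J : ℝ} (hf : HKIntegralEq f a b I)
    (hg : HKIntegralEq g a b J) : HKIntegralEq (fun x => f x - g x) a b (I - J) := by
  have := hk_add hf (hk_neg hg)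
  simpa [sub_eq_add_neg] using this

theorem hkIntegralEq_self (f : ℝ → ℝ) (a : ℝ) : HKIntegralEq f a a 0 := by
  rw [hkIntegralEq_iff]
  intro ε hε
  refine ⟨fun _ => 1, fun _ => one_pos, fun n t ξ hTP => ?_⟩
  have hA : ∀ i ≤ n, t i = a := fun i hi => le_antisymm
    (by rw [← hTP.hn]; exact hTP.t_le hi le_rfl)
    (by rw [← hTP.h0]; exact hTP.t_le (Nat.zero_le i) hi)
  have hRS : RS f n t ξ = 0 := by
    unfold RS
    refine Finset.sum_eq_zero (fun i hi => ?_)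
    rw [Finset.mem_range] at hi
    rw [hA i hi.le, hA (i+1) hi, sub_self, mul_zero]
  rw [hRS, sub_zero, abs_zero]
  exact hε

end HKAux


namespace HKAux

theorem hk_sub_interval {f : ℝ → ℝ} {a b c d : ℝ} (hac : a ≤ c) (hcd : c ≤ d) (hdb : d ≤ b)
    (h : HKIntegrable f a b) : HKIntegrable f c d := by
  obtain ⟨I, hI⟩ := h
  have key : ∀ ε : ℝ, 0 < ε → ∃ δ : ℝ → ℝ, (∀ x, 0 < δ x) ∧
      ∀ n t ξ n' t' ξ', TP c d δ n t ξ → TP c d δ n' t' ξ' →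
        |RS f n t ξ - RS f n' t' ξ'| ≤ 2 * ε := by
    intro ε hε
    obtain ⟨δ, hδ, H⟩ := hkIntegralEq_iff.mp hI ε hε
    refine ⟨δ, hδ, ?_⟩
    intro n t ξ n' t' ξ' hP hP'
    obtain ⟨nL, tL, ξL, hL⟩ := cousin hδ hac
    obtain ⟨nR, tR, ξR, hR⟩ := cousin hδ hdb
    have h1 := H _ _ _ ((hL.concat hP).concat hR)
    have h2 := H _ _ _ ((hL.concat hP').concat hR)
    rw [RS_concat f (hL.concat hP) hR, RS_concat f hL hP] at h1
    rw [RS_concat f (hL.concat hP') hR, RS_concat f hL hP'] at h2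
    have e1 := abs_lt.mp h1
    have e2 := abs_lt.mp h2
    rw [abs_le]
    constructor <;> linarith [e1.1, e1.2, e2.1, e2.2]
  choose δs hδpos hkey using fun k : ℕ => key (1/((k:ℝ)+1)) (by positivity)
  set δm : ℕ → ℝ → ℝ := fun k x => (Finset.range (k+1)).inf'
    (Finset.nonempty_range_iff.mpr (Nat.succ_ne_zero k)) (fun j => δs j x) with hδm
  have hδm_pos : ∀ k x, 0 < δm k x := by
    intro k x
    rw [hδm]
    exact (Finset.lt_inf'_iff _).mpr fun j _ => hδpos j x
  have hδm_le : ∀ k j, j ≤ k → ∀ x, δm k x ≤ δs j x := fun k j hj x =>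
    Finset.inf'_le _ (Finset.mem_range.mpr (by omega))
  choose ns ts ξs hPs using fun k : ℕ => cousin (hδm_pos k) hcd
  set u : ℕ → ℝ := fun k => RS f (ns k) (ts k) (ξs k) with hu
  have hdist : ∀ N k l : ℕ, N ≤ k → N ≤ l → |u k - u l| ≤ 2 * (1/((N:ℝ)+1)) := by
    intro N k l hk hl
    exact hkey N _ _ _ _ _ _ ((hPs k).mono_gauge (hδm_le k N hk))
      ((hPs l).mono_gauge (hδm_le l N hl))
  have hcauchy : CauchySeq u := by
    apply cauchySeq_of_le_tendsto_0 (b := fun N : ℕ => 2 * (1/((N:ℝ)+1)))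
    · intro k l N hk hl
      rw [Real.dist_eq]
      exact hdist N k l hk hl
    · have h1 : Tendsto (fun N : ℕ => (1:ℝ)/((N:ℝ)+1)) atTop (𝓝 0) :=
        tendsto_one_div_add_atTop_nhds_zero_nat
      have := h1.const_mul (2:ℝ)
      simpa using this
  obtain ⟨J, hJ⟩ := cauchySeq_tendsto_of_complete hcauchy
  refine ⟨J, hkIntegralEq_iff.mpr ?_⟩
  intro ε hε
  obtain ⟨N, hN⟩ := exists_nat_gt (4/ε)
  have hN1 : (0:ℝ) < (N:ℝ) + 1 := by positivity
  have h2' : 2 * (1/((N:ℝ)+1)) < ε := by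
    rw [div_lt_iff₀ hε] at hN
    rw [mul_one_div, div_lt_iff₀ hN1]
    nlinarith
  refine ⟨δm N, hδm_pos N, fun n t ξ hTP => ?_⟩
  have hbd : ∀ l, N ≤ l → |RS f n t ξ - u l| ≤ 2 * (1/((N:ℝ)+1)) := fun l hl =>
    hkey N _ _ _ _ _ _ (hTP.mono_gauge (hδm_le N N le_rfl))
      ((hPs l).mono_gauge (hδm_le l N hl))
  have hlim : Tendsto (fun l => |RS f n t ξ - u l|) atTop (𝓝 |RS f n t ξ - J|) :=
    (tendsto_const_nhds.sub hJ).abs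
  have hle := le_of_tendsto hlim (eventually_atTop.mpr ⟨N, hbd⟩)
  linarith

theorem hk_add_point {f : ℝ → ℝ} {a b c : ℝ} (hac : a ≤ c) (hcb : c ≤ b)
    (h : HKIntegrable f a b) :
    hkIntegral f a b = hkIntegral f a c + hkIntegral f c b := by
  have h1 : HKIntegrable f a c := hk_sub_interval le_rfl hac hcb h
  have h2 : HKIntegrable f c b := hk_sub_interval hac hcb le_rfl h
  by_contra hne
  have hΔpos : 0 < |hkIntegral f a b - (hkIntegral f a c + hkIntegral f c b)| := by
    rw [abs_pos, sub_ne_zero]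
    exact hne
  set Δ := |hkIntegral f a b - (hkIntegral f a c + hkIntegral f c b)| with hΔ
  have hε : 0 < Δ/3 := by linarith
  obtain ⟨δ, hδpos, H⟩ := hkIntegralEq_iff.mp (hkIntegral_spec h) (Δ/3) hε
  obtain ⟨δ1, hδ1pos, H1⟩ := hkIntegralEq_iff.mp (hkIntegral_spec h1) (Δ/3) hε
  obtain ⟨δ2, hδ2pos, H2⟩ := hkIntegralEq_iff.mp (hkIntegral_spec h2) (Δ/3) hε
  set δg : ℝ → ℝ := fun x => min (δ x) (min (δ1 x) (δ2 x)) with hδg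
  have hδgpos : ∀ x, 0 < δg x := fun x => lt_min (hδpos x) (lt_min (hδ1pos x) (hδ2pos x))
  obtain ⟨n1, t1, ξ1, hP1⟩ := cousin hδgpos hac
  obtain ⟨n2, t2, ξ2, hP2⟩ := cousin hδgpos hcb
  have hfull := H _ _ _ ((hP1.concat hP2).mono_gauge (fun x => min_le_left _ _))
  rw [RS_concat f hP1 hP2] at hfull
  have e1 := abs_lt.mp (H1 _ _ _ (hP1.mono_gauge
    (fun x => (min_le_right _ _).trans (min_le_left _ _))))
  have e2 := abs_lt.mp (H2 _ _ _ (hP2.mono_gauge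
    (fun x => (min_le_right _ _).trans (min_le_right _ _))))
  have e0 := abs_lt.mp hfull
  have : Δ < Δ := by
    calc Δ = |hkIntegral f a b - (hkIntegral f a c + hkIntegral f c b)| := hΔ
    _ < 3 * (Δ/3) := by rw [abs_lt]; constructor <;> linarith [e0.1, e0.2, e1.1, e1.2, e2.1, e2.2]
    _ = Δ := by ring
  exact absurd this (lt_irrefl Δ)

theorem prefix_est {f : ℝ → ℝ} {a b : ℝ} (hf : HKIntegrable f a b)
    {δ : ℝ → ℝ} (hδ : ∀ x, 0 < δ x) {ε : ℝ} (hε : 0 < ε)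
    (hδw : ∀ n t ξ, TP a b δ n t ξ → |RS f n t ξ - hkIntegral f a b| < ε)
    {n t ξ} (hTP : TP a b δ n t ξ) {k : ℕ} (hk : k ≤ n) :
    |RS f k t ξ - hkIntegral f a (t k)| ≤ 2 * ε := by
  have hac : a ≤ t k := (hTP.t_mem hk).1
  have hcb : t k ≤ b := (hTP.t_mem hk).2
  have h2 : HKIntegrable f (t k) b := hk_sub_interval hac hcb le_rfl hf
  obtain ⟨δ2, hδ2, H2⟩ := hkIntegralEq_iff.mp (hkIntegral_spec h2) ε hε
  obtain ⟨m, s, σ, hR⟩ := cousin (δ := fun x => min (δ x) (δ2 x))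
    (fun x => lt_min (hδ x) (hδ2 x)) hcb
  have hRδ := hR.mono_gauge (fun x => min_le_left (δ x) (δ2 x))
  have hfull := hδw _ _ _ ((hTP.prefix hk).concat hRδ)
  rw [RS_concat f (hTP.prefix hk) hRδ] at hfull
  have hRest := H2 _ _ _ (hR.mono_gauge (fun x => min_le_right (δ x) (δ2 x)))
  have hI := hk_add_point hac hcb hf
  have e1 := abs_lt.mp hfull
  have e2 := abs_lt.mp hRest
  rw [abs_le]
  constructor <;> linarith

theorem cont_primitive {f : ℝ → ℝ} {a b : ℝ} (hf : HKIntegrable f a b) :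
    ContinuousOn (fun c => hkIntegral f a c) (Icc a b) := by
  intro x hx
  rw [Metric.continuousWithinAt_iff]
  intro ε hε
  have hε' : 0 < ε/9 := by linarith
  have hfL : HKIntegrable f a x := hk_sub_interval le_rfl hx.1 hx.2 hf
  obtain ⟨δL, hδLpos, HL⟩ := hkIntegralEq_iff.mp (hkIntegral_spec hfL) (ε/9) hε'
  have hfR : HKIntegrable f x b := hk_sub_interval hx.1 hx.2 le_rfl hf
  obtain ⟨δR, hδRpos, HR⟩ := hkIntegralEq_iff.mp (hkIntegral_spec hfR) (ε/9) hε'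
  refine ⟨min (min (δL x) (δR x)) ((ε/9) / (|f x| + 1)), lt_min (lt_min (hδLpos x) (hδRpos x)) (by positivity), ?_⟩
  intro y hy hdist
  rw [Real.dist_eq] at hdist ⊢
  have hfx1 : 0 < |f x| + 1 := by positivity
  have hdist3 : |y - x| < (ε/9) / (|f x| + 1) := lt_of_lt_of_le hdist (min_le_right _ _)
  have hfxy : |f x| * |y - x| < ε/9 := by
    rcases eq_or_lt_of_le (abs_nonneg (f x)) with h0 | h0
    · rw [← h0]; simpa using hε'
    · calc |f x| * |y - x| < |f x| * ((ε/9) / (|f x| + 1)) := by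
            exact mul_lt_mul_of_pos_left hdist3 h0
        _ ≤ ε/9 := by
            rw [mul_div_assoc']
            rw [div_le_iff₀ hfx1]
            nlinarith [abs_nonneg (f x)]
  rcases le_total y x with hyx | hxy
  · rcases eq_or_lt_of_le hyx with rfl | hylt
    · simpa using hε
    have hdL : |y - x| < δL x := lt_of_lt_of_le hdist ((min_le_left _ _).trans (min_le_left _ _))
    obtain ⟨nQ, tQ, ξQ, hQ⟩ := cousin hδLpos (hy.1 : a ≤ y)
    have hsingle : TP y x δL 1 (single y x) (fun _ => x) :=
      TP.single_tp hyx hyx le_rfl (by rw [abs_sub_comm] at hdL; have := abs_lt.mp hdL; linarith)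
        (by linarith [hδLpos x])
    have hTPfull := hQ.concat hsingle
    have hfull := HL _ _ _ hTPfull
    rw [RS_concat f hQ hsingle, RS_single] at hfull
    have hck : catt nQ tQ (single y x) nQ = y := by simp [catt, hQ.hn]
    have hpre := prefix_est hfL hδLpos hε' HL hTPfull (Nat.le_add_right nQ 1)
    rw [RS_cat_left f (le_rfl), hck] at hpre
    have e1 := abs_lt.mp hfull
    have e2 := abs_le.mp hpre
    have hax : |f x * (x - y)| < ε/9 := by
      rw [abs_mul, abs_sub_comm]
      exact hfxy
    have e3 := abs_lt.mp hax
    rw [abs_lt]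
    constructor <;> linarith
  · rcases eq_or_lt_of_le hxy with rfl | hxlt
    · simpa using hε
    have hdR : |y - x| < δR x := lt_of_lt_of_le hdist ((min_le_left _ _).trans (min_le_right _ _))
    obtain ⟨nQ, tQ, ξQ, hQ⟩ := cousin hδRpos (hy.2 : y ≤ b)
    have hsingle : TP x y δR 1 (single x y) (fun _ => x) :=
      TP.single_tp hxy le_rfl hxy (by linarith [hδRpos x])
        (by have := abs_lt.mp hdR; linarith)
    have hTPfull := hsingle.concat hQ
    have hpre := prefix_est hfR hδRpos hε' HR hTPfull (by omega : 1 ≤ 1 + nQ)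
    rw [RS_cat_left f (le_rfl), RS_single] at hpre
    have hck : catt 1 (single x y) tQ 1 = y := by simp [catt, single]
    rw [hck] at hpre
    have hfay : HKIntegrable f a y := hk_sub_interval le_rfl hy.1 hy.2 hf
    have hsum : hkIntegral f a y = hkIntegral f a x + hkIntegral f x y :=
      hk_add_point hx.1 hxy hfay
    have e2 := abs_le.mp hpre
    have hax : |f x * (y - x)| < ε/9 := by
      rw [abs_mul]
      exact hfxy
    have e3 := abs_lt.mp hax
    rw [abs_lt]
    constructor <;> linarith

end HKAux


namespace HKAux

theorem hk_of_continuous {g : ℝ → ℝ} (hg : Continuous g) {a b : ℝ} (hab : a ≤ b) :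
    HKIntegralEq g a b (∫ x in a..b, g x) := by
  rw [hkIntegralEq_iff]
  intro ε hε
  have hba1 : 0 < b - a + 1 := by linarith
  have hε' : 0 < ε / (b - a + 1) := by positivity
  have huc : UniformContinuousOn g (Icc a b) :=
    isCompact_Icc.uniformContinuousOn_of_continuous hg.continuousOn
  rw [Metric.uniformContinuousOn_iff] at huc
  obtain ⟨η, hη, Huc⟩ := huc (ε / (b - a + 1)) hε'
  refine ⟨fun _ => η/2, fun _ => by linarith, fun n t ξ hTP => ?_⟩
  have hint : ∀ i < n, IntervalIntegrable g volume (t i) (t (i+1)) :=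
    fun i _ => hg.intervalIntegrable _ _
  have hsplit : ∫ x in a..b, g x = ∑ i ∈ Finset.range n, ∫ x in t i..t (i+1), g x := by
    rw [intervalIntegral.sum_integral_adjacent_intervals hint, hTP.h0, hTP.hn]
  have hterm : ∀ i ∈ Finset.range n,
      |g (ξ i) * (t (i+1) - t i) - ∫ x in t i..t (i+1), g x| ≤
        (ε / (b - a + 1)) * (t (i+1) - t i) := by
    intro i hi
    rw [Finset.mem_range] at hi
    have hmono := hTP.mono i hi
    have htag := hTP.tag i hi
    have hfine := hTP.fine i hi
    have hconst : g (ξ i) * (t (i+1) - t i) = ∫ _ in t i..t (i+1), g (ξ i) := by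
      rw [intervalIntegral.integral_const, smul_eq_mul]; ring
    rw [hconst, ← intervalIntegral.integral_sub (intervalIntegrable_const) (hint i hi)]
    have hbound : ∀ x ∈ Set.uIoc (t i) (t (i+1)), ‖g (ξ i) - g x‖ ≤ ε / (b - a + 1) := by
      intro x hx
      rw [Set.uIoc_of_le hmono] at hx
      have hx1 : t i ≤ x := le_of_lt hx.1
      have hx2 : x ≤ t (i+1) := hx.2
      have hmem1 : ξ i ∈ Icc a b := by
        have := hTP.tag_mem hi; exact ⟨this.1, this.2⟩
      have hmem2 : x ∈ Icc a b := ⟨(hTP.t_mem hi.le).1.trans hx1, hx2.trans (hTP.t_mem hi).2⟩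
      have hd : dist (ξ i) x < η := by
        have hfine1 : ξ i - η/2 < t i := hfine.1
        have hfine2 : t (i+1) < ξ i + η/2 := hfine.2
        have htag2 : ξ i ≤ t (i+1) := htag.2
        rw [Real.dist_eq, abs_lt]
        constructor
        · linarith
        · linarith
      have := Huc (ξ i) hmem1 x hmem2 hd
      rw [Real.dist_eq] at this
      exact le_of_lt this
    have := intervalIntegral.norm_integral_le_of_norm_le_const hbound
    rw [Real.norm_eq_abs] at this
    calc |∫ x in t i..t (i+1), (g (ξ i) - g x)| ≤ (ε / (b - a + 1)) * |t (i+1) - t i| := this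
      _ = (ε / (b - a + 1)) * (t (i+1) - t i) := by rw [abs_of_nonneg (by linarith)]
  calc |RS g n t ξ - ∫ x in a..b, g x|
      = |∑ i ∈ Finset.range n, (g (ξ i) * (t (i+1) - t i) - ∫ x in t i..t (i+1), g x)| := by
        rw [hsplit, RS, ← Finset.sum_sub_distrib]
    _ ≤ ∑ i ∈ Finset.range n, |g (ξ i) * (t (i+1) - t i) - ∫ x in t i..t (i+1), g x| :=
        Finset.abs_sum_le_sum_abs _ _
    _ ≤ ∑ i ∈ Finset.range n, (ε / (b - a + 1)) * (t (i+1) - t i) :=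
        Finset.sum_le_sum hterm
    _ = (ε / (b - a + 1)) * (b - a) := by
        rw [← Finset.mul_sum, Finset.sum_range_sub, hTP.h0, hTP.hn]
    _ < ε := by
        rw [div_mul_eq_mul_div, div_lt_iff₀ hba1]
        nlinarith

end HKAux

/-- The Poisson kernel for the unit disc. -/
def poissonKernelR (r θ : ℝ) : ℝ :=
  (1 - r ^ 2) / (2 * π * (1 - 2 * r * Real.cos θ + r ^ 2))

/-- The Poisson integral of `f`, evaluated at the point `r e^{iθ}` of the unit disc. -/
def poissonIntegral (f : ℝ → ℝ) (r θ : ℝ) : ℝ :=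
  hkIntegral (fun φ => f φ * poissonKernelR r (φ - θ)) (-π) π

/-- The Alexiewicz norm over the circle: the supremum of `|∫_I g|` over intervals `I`
of length at most `2π`. -/
def alexNorm (g : ℝ → ℝ) : ℝ :=
  sSup {v | ∃ a b : ℝ, a ≤ b ∧ b - a ≤ 2 * π ∧ v = |hkIntegral g a b|}

/-- The `L^p` norm on `[-π,π]`. -/
def lpNorm (p : ℝ) (g : ℝ → ℝ) : ℝ :=
  (∫ θ in (-π)..π, |g θ| ^ p) ^ (1 / p)

namespace PKAux

open HKAux intervalIntegral

def pk' (r x : ℝ) : ℝ := -((1 - r^2) * (2*r*Real.sin x)) / (2*π*(1 - 2*r*Real.cos x + r^2)^2)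

theorem one_sub_cos_ge {x : ℝ} (hx : |x| ≤ π) : x^2/25 ≤ 1 - Real.cos x := by
  rw [← Real.cos_abs x, ← sq_abs x]
  set y := |x| with hy
  have hy0 : 0 ≤ y := abs_nonneg x
  have hyπ : y ≤ π := hx
  rcases le_total y 1 with h | h
  · have hb := Real.cos_bound (by rwa [abs_of_nonneg hy0] : |y| ≤ 1)
    have hb2 := (abs_le.mp hb).2
    have hy4 : |y|^4 ≤ y^2 := by
      rw [abs_of_nonneg hy0]
      have hy2 : y^2 ≤ 1 := by nlinarith
      nlinarith [sq_nonneg y]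
    nlinarith
  · have hc : Real.cos y ≤ Real.cos 1 :=
      Real.cos_le_cos_of_nonneg_of_le_pi zero_le_one hyπ h
    have hb := Real.cos_bound (by norm_num : |(1:ℝ)| ≤ 1)
    have hc1 := (abs_le.mp hb).2
    have hpi : π < 3.15 := Real.pi_lt_d2
    norm_num at hc1
    nlinarith

section Kernel

variable {r : ℝ}

theorem pk_denom_ge (hr0 : 0 ≤ r) (x : ℝ) : (1-r)^2 ≤ 1 - 2*r*Real.cos x + r^2 := by
  nlinarith [Real.cos_le_one x]

theorem pk_denom_pos (hr0 : 0 ≤ r) (hr1 : r < 1) (x : ℝ) : 0 < 1 - 2*r*Real.cos x + r^2 :=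
  lt_of_lt_of_le (by nlinarith) (pk_denom_ge hr0 x)

theorem pk_denom_ge' (hr : 1/2 ≤ r) {x : ℝ} (hx : |x| ≤ π) :
    (1-r)^2 + (x/5)^2 ≤ 1 - 2*r*Real.cos x + r^2 := by
  have h := one_sub_cos_ge hx
  have h2 := Real.cos_le_one x
  nlinarith

theorem pk_pos (hr : 1/2 ≤ r) (hr1 : r < 1) (x : ℝ) : 0 < poissonKernelR r x := by
  rw [poissonKernelR]
  have hD := pk_denom_pos (by linarith) hr1 x
  have hnum : (0:ℝ) < 1 - r^2 := by nlinarith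
  exact div_pos hnum (mul_pos (by positivity) hD)

theorem pk_le (hr : 1/2 ≤ r) (hr1 : r < 1) (x : ℝ) : poissonKernelR r x ≤ 1/(π*(1-r)) := by
  rw [poissonKernelR]
  have hD := pk_denom_pos (by linarith) hr1 x
  have hDge := pk_denom_ge (r := r) (by linarith) x
  have hπ := Real.pi_pos
  have h1 : (0:ℝ) < 2*π*(1 - 2*r*Real.cos x + r^2) := mul_pos (by positivity) hD
  have h2 : (0:ℝ) < π*(1-r) := mul_pos hπ (by linarith)
  rw [div_le_div_iff₀ h1 h2]
  have h6 : 2*π*((1-r)^2) ≤ 2*π*(1 - 2*r*Real.cos x + r^2) :=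
    mul_le_mul_of_nonneg_left hDge (by positivity)
  nlinarith [mul_nonneg (mul_nonneg hπ.le (sq_nonneg (1-r))) (by linarith : (0:ℝ) ≤ 1 - r)]

theorem pk_cont (hr0 : 0 ≤ r) (hr1 : r < 1) : Continuous (poissonKernelR r) := by
  apply Continuous.div continuous_const
  · fun_prop
  · intro x
    have := pk_denom_pos hr0 hr1 x
    positivity

theorem pk'_cont (hr0 : 0 ≤ r) (hr1 : r < 1) : Continuous (pk' r) := by
  apply Continuous.div (by fun_prop)
  · fun_prop
  · intro x
    have := pk_denom_pos hr0 hr1 x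
    positivity

theorem pk_hasDeriv (hr0 : 0 ≤ r) (hr1 : r < 1) (x : ℝ) :
    HasDerivAt (fun y => poissonKernelR r y) (pk' r x) x := by
  have hD := pk_denom_pos hr0 hr1 x
  have hπ := Real.pi_pos
  have h1 : HasDerivAt (fun y => 1 - 2*r*Real.cos y + r^2) (2*r*Real.sin x) x := by
    have hc := (Real.hasDerivAt_cos x).const_mul (2*r)
    have h2 := (hasDerivAt_const x (1:ℝ)).sub hc
    have h3 := h2.add_const (r^2)
    refine h3.congr_deriv ?_
    ring
  have hu := h1.const_mul (2*π)
  have hdiv := (hasDerivAt_const x (1 - r^2)).div hu (by positivity)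
  refine hdiv.congr_deriv ?_
  rw [pk']
  have hDne : (1 - 2*r*Real.cos x + r^2) ≠ 0 := ne_of_gt hD
  field_simp
  ring

theorem pk'_le (hr : 1/2 ≤ r) (hr1 : r < 1) (t : ℝ) : |pk' r t| ≤ 2/(π*(1-r)^4) := by
  have hD := pk_denom_pos (by linarith) hr1 t
  have hDge := pk_denom_ge (r := r) (by linarith) t
  have hπ := Real.pi_pos
  have ha : 0 < 1 - r := by linarith
  rw [pk', abs_div]
  have hden : |2*π*(1 - 2*r*Real.cos t + r^2)^2| = 2*π*(1 - 2*r*Real.cos t + r^2)^2 :=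
    abs_of_pos (by positivity)
  rw [hden]
  have hnum : |(-((1 - r^2) * (2*r*Real.sin t)))| ≤ 4 := by
    rw [abs_neg, abs_mul]
    have h1 : |1 - r^2| ≤ 2 := by rw [abs_le]; constructor <;> nlinarith
    have h2 : |2*r*Real.sin t| ≤ 2 := by
      rw [abs_mul, abs_mul]
      have hs := Real.abs_sin_le_one t
      have : |(2:ℝ)| = 2 := by norm_num
      rw [this, abs_of_nonneg (by linarith : (0:ℝ) ≤ r)]
      nlinarith
    nlinarith [abs_nonneg (1 - r^2), abs_nonneg (2*r*Real.sin t)]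
  have h5 : (1-r)^4 ≤ (1 - 2*r*Real.cos t + r^2)^2 := by
    calc (1-r)^4 = ((1-r)^2)^2 := by ring
      _ ≤ (1 - 2*r*Real.cos t + r^2)^2 := by
          apply pow_le_pow_left₀ (sq_nonneg _) hDge
  have h6 : 2*π*((1-r)^4) ≤ 2*π*((1 - 2*r*Real.cos t + r^2)^2) :=
    mul_le_mul_of_nonneg_left h5 (by positivity)
  have hdpos : (0:ℝ) < 2*(π*(1-r)^4) := by
    have := pow_pos ha 4
    have := Real.pi_pos
    positivity
  calc |(-((1 - r^2) * (2*r*Real.sin t)))| / (2*π*(1 - 2*r*Real.cos t + r^2)^2)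
      ≤ 4 / (2*(π*(1-r)^4)) := by
        apply div_le_div₀ (by norm_num) hnum hdpos
        linarith
    _ = 2/(π*(1-r)^4) := by
        rw [show (4:ℝ) = 2*2 by norm_num]
        exact mul_div_mul_left _ _ two_ne_zero

end Kernel

end PKAux


namespace PKAux

open HKAux intervalIntegral

theorem hasDerivAt_AD1 {c : ℝ} (hc : 0 < c) (x : ℝ) :
    HasDerivAt (fun y => 5*c⁻¹ * Real.arctan (y/(5*c))) (1/(c^2 + (x/5)^2)) x := by
  have h1 : HasDerivAt (fun y : ℝ => y/(5*c)) (1/(5*c)) x := (hasDerivAt_id x).div_const (5*c)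
  have h2 := (Real.hasDerivAt_arctan (x/(5*c))).comp x h1
  have h3 := h2.const_mul (5*c⁻¹)
  refine h3.congr_deriv ?_
  have hc' : c ≠ 0 := ne_of_gt hc
  field_simp

theorem hasDerivAt_AD2 {c : ℝ} (hc : 0 < c) (x : ℝ) :
    HasDerivAt (fun y => -(25/2) * (c^2 + (y/5)^2)⁻¹) (x/(c^2 + (x/5)^2)^2) x := by
  have hpos : 0 < c^2 + (x/5)^2 := add_pos_of_pos_of_nonneg (pow_pos hc 2) (sq_nonneg _)
  have h1 : HasDerivAt (fun y : ℝ => y/5) ((1:ℝ)/5) x := (hasDerivAt_id x).div_const 5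
  have hpow := h1.pow 2
  have hadd := hpow.const_add (c^2)
  have hinv := hadd.inv (ne_of_gt hpos)
  have hmul := hinv.const_mul (-(25/2 : ℝ))
  refine hmul.congr_deriv ?_
  simp only [Pi.pow_apply]
  have hc' : c^2 + (x/5)^2 ≠ 0 := ne_of_gt hpos
  field_simp
  ring

theorem integral_mono_interval_nonneg {w : ℝ → ℝ} (hw : Continuous w) (hw0 : ∀ t, 0 ≤ w t)
    {A B x y : ℝ} (h1 : A ≤ x) (hxy : x ≤ y) (h2 : y ≤ B) :
    ∫ t in x..y, w t ≤ ∫ t in A..B, w t := by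
  have i1 : (∫ t in A..x, w t) + (∫ t in x..y, w t) = ∫ t in A..y, w t :=
    integral_add_adjacent_intervals (hw.intervalIntegrable A x) (hw.intervalIntegrable x y)
  have i2 : (∫ t in A..y, w t) + (∫ t in y..B, w t) = ∫ t in A..B, w t :=
    integral_add_adjacent_intervals (hw.intervalIntegrable A y) (hw.intervalIntegrable y B)
  have n1 : 0 ≤ ∫ t in A..x, w t := integral_nonneg h1 (fun u _ => hw0 u)
  have n2 : 0 ≤ ∫ t in y..B, w t := integral_nonneg h2 (fun u _ => hw0 u)
  linarith

theorem int_two_periods {w : ℝ → ℝ} (hw : Continuous w) (hper : Function.Periodic w (2*π)) :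
    ∫ t in (-(2*π))..(2*π), w t = 2 * ∫ t in (-π)..π, w t := by
  have h1 : ∫ t in (-(2*π))..(0:ℝ), w t = ∫ t in (-π)..π, w t := by
    have := hper.intervalIntegral_add_eq (-(2*π)) (-π)
    rw [show -(2*π) + 2*π = (0:ℝ) by ring, show -π + 2*π = π by ring] at this
    exact this
  have h2 : ∫ t in (0:ℝ)..(2*π), w t = ∫ t in (-π)..π, w t := by
    have := hper.intervalIntegral_add_eq (0:ℝ) (-π)
    rw [show (0:ℝ) + 2*π = 2*π by ring, show -π + 2*π = π by ring] at this
    exact this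
  rw [← integral_add_adjacent_intervals (hw.intervalIntegrable (-(2*π)) 0)
    (hw.intervalIntegrable 0 (2*π)), h1, h2]
  ring

theorem pk_periodic (r : ℝ) : Function.Periodic (poissonKernelR r) (2*π) := by
  intro x
  simp [poissonKernelR, Real.cos_add_two_pi]

theorem abs_pk'_periodic (r : ℝ) : Function.Periodic (fun x => |pk' r x|) (2*π) := by
  intro x
  simp [pk', Real.cos_add_two_pi, Real.sin_add_two_pi]

section KernelInt

variable {r : ℝ}

theorem int_pk_pi (hr : 1/2 ≤ r) (hr1 : r < 1) :
    ∫ t in (-π)..π, poissonKernelR r t ≤ 5 := by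
  have ha : 0 < 1 - r := by linarith
  have hπ := Real.pi_pos
  have hdenpos : ∀ t : ℝ, 0 < (1-r)^2 + (t/5)^2 :=
    fun t => add_pos_of_pos_of_nonneg (pow_pos ha 2) (sq_nonneg _)
  set ψ : ℝ → ℝ := fun t => (1-r^2)/(2*π) * (1/((1-r)^2 + (t/5)^2)) with hψ
  have hψcont : Continuous ψ := by
    apply Continuous.mul continuous_const
    exact Continuous.div continuous_const (by fun_prop) (fun t => ne_of_gt (hdenpos t))
  have hmono : ∫ t in (-π)..π, poissonKernelR r t ≤ ∫ t in (-π)..π, ψ t := by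
    apply integral_mono_on (by linarith) ((pk_cont (by linarith) hr1).intervalIntegrable _ _)
      (hψcont.intervalIntegrable _ _)
    intro t ht
    have htπ : |t| ≤ π := abs_le.mpr ⟨ht.1, ht.2⟩
    have hX := pk_denom_ge' hr htπ
    have hD := pk_denom_pos (by linarith) hr1 t
    change _ ≤ (1-r^2)/(2*π) * (1/((1-r)^2 + (t/5)^2))
    rw [poissonKernelR]
    have heq : (1-r^2)/(2*π) * (1/((1-r)^2 + (t/5)^2))
        = (1-r^2)/(2*π*((1-r)^2 + (t/5)^2)) := by
      rw [div_mul_div_comm, mul_one]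
    rw [heq]
    apply div_le_div_of_nonneg_left (by nlinarith) (mul_pos (by positivity) (hdenpos t))
    exact mul_le_mul_of_nonneg_left hX (by positivity)
  have hFTC : ∫ t in (-π)..π, (fun t => 1/((1-r)^2 + (t/5)^2)) t
      = 5*(1-r)⁻¹ * Real.arctan (π/(5*(1-r))) - 5*(1-r)⁻¹ * Real.arctan ((-π)/(5*(1-r))) := by
    apply integral_eq_sub_of_hasDerivAt (fun t _ => hasDerivAt_AD1 ha t)
    exact (Continuous.div continuous_const (by fun_prop)
      (fun t => ne_of_gt (hdenpos t))).intervalIntegrable _ _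
  have harc : 5*(1-r)⁻¹ * Real.arctan (π/(5*(1-r))) - 5*(1-r)⁻¹ * Real.arctan ((-π)/(5*(1-r)))
      ≤ 5*(1-r)⁻¹ * π := by
    have h1 := Real.arctan_lt_pi_div_two (π/(5*(1-r)))
    have h2 := Real.neg_pi_div_two_lt_arctan ((-π)/(5*(1-r)))
    have h3 : (0:ℝ) ≤ 5*(1-r)⁻¹ := by positivity
    nlinarith
  have hint : ∫ t in (-π)..π, ψ t ≤ (1-r^2)/(2*π) * (5*(1-r)⁻¹ * π) := by
    rw [hψ]
    rw [intervalIntegral.integral_const_mul]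
    apply mul_le_mul_of_nonneg_left _ (div_nonneg (by nlinarith) (by positivity))
    rw [hFTC]
    exact harc
  have hfin : (1-r^2)/(2*π) * (5*(1-r)⁻¹ * π) ≤ 5 := by
    have heq : (1-r^2)/(2*π) * (5*(1-r)⁻¹ * π) = 5*(1+r)/2 := by
      field_simp
      ring
    rw [heq]
    linarith
  linarith

theorem int_pk_le (hr : 1/2 ≤ r) (hr1 : r < 1) {x y : ℝ} (hx : -(2*π) ≤ x) (hxy : x ≤ y)
    (hy : y ≤ 2*π) : ∫ t in x..y, poissonKernelR r t ≤ 10 := by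
  have h1 : ∫ t in x..y, poissonKernelR r t ≤ ∫ t in (-(2*π))..(2*π), poissonKernelR r t :=
    integral_mono_interval_nonneg (pk_cont (by linarith) hr1)
      (fun t => (pk_pos hr hr1 t).le) hx hxy hy
  rw [int_two_periods (pk_cont (by linarith) hr1) (pk_periodic r)] at h1
  have := int_pk_pi hr hr1
  linarith

theorem int_abs_pk'_pi (hr : 1/2 ≤ r) (hr1 : r < 1) :
    ∫ t in (-π)..π, |pk' r t| ≤ 17/(1-r) := by
  have ha : 0 < 1 - r := by linarith
  have hπ := Real.pi_pos
  have hcont : Continuous (fun t => |pk' r t|) := (pk'_cont (by linarith) hr1).abs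
  have hdenpos : ∀ t : ℝ, 0 < (1-r)^2 + (t/5)^2 :=
    fun t => add_pos_of_pos_of_nonneg (pow_pos ha 2) (sq_nonneg _)
  set W : ℝ → ℝ := fun t => (1-r^2)*(2*r)/(2*π) * (t/((1-r)^2 + (t/5)^2)^2) with hW
  have hWcont : Continuous W := by
    apply Continuous.mul continuous_const
    exact Continuous.div continuous_id (by fun_prop) (fun t => ne_of_gt (pow_pos (hdenpos t) 2))
  -- symmetry
  have hodd : ∀ s : ℝ, |pk' r (-s)| = |pk' r s| := by
    intro s
    have : pk' r (-s) = -pk' r s := by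
      rw [pk', pk', Real.sin_neg, Real.cos_neg]
      ring
    rw [this, abs_neg]
  have hsym : ∫ t in (-π)..(0:ℝ), |pk' r t| = ∫ t in (0:ℝ)..π, |pk' r t| := by
    have h := intervalIntegral.integral_comp_neg (a := (0:ℝ)) (b := π) (fun t => |pk' r t|)
    simp only [neg_zero] at h
    rw [← h]
    apply intervalIntegral.integral_congr
    intro s _
    exact hodd s
  have hsplit : ∫ t in (-π)..π, |pk' r t| =
      (∫ t in (-π)..(0:ℝ), |pk' r t|) + ∫ t in (0:ℝ)..π, |pk' r t| :=
    (integral_add_adjacent_intervals (hcont.intervalIntegrable _ _)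
      (hcont.intervalIntegrable _ _)).symm
  -- bound on [0, π]
  have hmono : ∫ t in (0:ℝ)..π, |pk' r t| ≤ ∫ t in (0:ℝ)..π, W t := by
    apply integral_mono_on (by linarith) (hcont.intervalIntegrable _ _)
      (hWcont.intervalIntegrable _ _)
    intro t ht
    have htπ : |t| ≤ π := abs_le.mpr ⟨by linarith [ht.1], ht.2⟩
    have hX := pk_denom_ge' hr htπ
    have hD := pk_denom_pos (by linarith) hr1 t
    have hsin : |Real.sin t| ≤ t := by
      rw [abs_of_nonneg (Real.sin_nonneg_of_nonneg_of_le_pi ht.1 ht.2)]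
      exact (Real.sin_le ht.1)
    change _ ≤ (1-r^2)*(2*r)/(2*π) * (t/((1-r)^2 + (t/5)^2)^2)
    rw [pk', abs_div]
    have hden : |2*π*(1 - 2*r*Real.cos t + r^2)^2| = 2*π*(1 - 2*r*Real.cos t + r^2)^2 :=
      abs_of_pos (by positivity)
    rw [hden]
    have heq : (1-r^2)*(2*r)/(2*π) * (t/((1-r)^2 + (t/5)^2)^2)
        = ((1-r^2)*(2*r)*t)/(2*π*((1-r)^2 + (t/5)^2)^2) := by
      rw [div_mul_div_comm]
    rw [heq]
    have hnum : |(-((1 - r^2) * (2*r*Real.sin t)))| ≤ (1-r^2)*(2*r)*t := by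
      rw [abs_neg, abs_mul, abs_mul]
      rw [abs_of_nonneg (by nlinarith : (0:ℝ) ≤ 1 - r^2),
        abs_of_nonneg (by linarith : (0:ℝ) ≤ 2*r)]
      have h2r : (0:ℝ) ≤ 2*r := by linarith
      have h1r : (0:ℝ) ≤ 1 - r^2 := by nlinarith
      calc (1-r^2) * (2*r*|Real.sin t|) ≤ (1-r^2) * (2*r*t) :=
            mul_le_mul_of_nonneg_left (mul_le_mul_of_nonneg_left hsin h2r) h1r
        _ = (1-r^2)*(2*r)*t := by ring
    have hXsq : ((1-r)^2 + (t/5)^2)^2 ≤ (1 - 2*r*Real.cos t + r^2)^2 :=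
      pow_le_pow_left₀ (hdenpos t).le hX 2
    apply div_le_div₀ (mul_nonneg (mul_nonneg (by nlinarith : (0:ℝ) ≤ 1 - r^2)
      (by linarith : (0:ℝ) ≤ 2*r)) ht.1) hnum (by positivity)
    exact mul_le_mul_of_nonneg_left hXsq (by positivity)
  -- FTC for W
  have hFTC : ∫ t in (0:ℝ)..π, (fun t => t/((1-r)^2 + (t/5)^2)^2) t
      = (-(25/2) * ((1-r)^2 + (π/5)^2)⁻¹) - (-(25/2) * ((1-r)^2 + ((0:ℝ)/5)^2)⁻¹) := by
    apply integral_eq_sub_of_hasDerivAt (fun t _ => hasDerivAt_AD2 ha t)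
    exact (Continuous.div continuous_id (by fun_prop)
      (fun t => ne_of_gt (pow_pos (hdenpos t) 2))).intervalIntegrable _ _
  have hB : (-(25/2) * ((1-r)^2 + (π/5)^2)⁻¹) - (-(25/2) * ((1-r)^2 + ((0:ℝ)/5)^2)⁻¹)
      ≤ 25/2 * ((1-r)^2)⁻¹ := by
    have h1 : 0 < ((1-r)^2 + (π/5)^2)⁻¹ := inv_pos.mpr (hdenpos π)
    have h2 : ((1-r)^2 + ((0:ℝ)/5)^2) = (1-r)^2 := by norm_num
    rw [h2]
    linarith
  have hintW : ∫ t in (0:ℝ)..π, W t ≤ (1-r^2)*(2*r)/(2*π) * (25/2 * ((1-r)^2)⁻¹) := by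
    rw [hW, intervalIntegral.integral_const_mul]
    apply mul_le_mul_of_nonneg_left _ (div_nonneg (mul_nonneg (by nlinarith) (by linarith)) (by positivity))
    rw [hFTC]
    exact hB
  have hfin : 2 * ((1-r^2)*(2*r)/(2*π) * (25/2 * ((1-r)^2)⁻¹)) ≤ 17/(1-r) := by
    have heq : 2 * ((1-r^2)*(2*r)/(2*π) * (25/2 * ((1-r)^2)⁻¹)) = 25*r*(1+r)/(π*(1-r)) := by
      field_simp
      ring
    rw [heq, div_le_div_iff₀ (mul_pos hπ ha) ha]
    have hπ2 : 3.141592 < π := Real.pi_gt_d6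
    nlinarith
  linarith [hsym, hsplit, hmono, hintW, hfin]

theorem int_abs_pk'_le (hr : 1/2 ≤ r) (hr1 : r < 1) {x y : ℝ} (hx : -(2*π) ≤ x) (hxy : x ≤ y)
    (hy : y ≤ 2*π) : ∫ t in x..y, |pk' r t| ≤ 34/(1-r) := by
  have hcont : Continuous (fun t => |pk' r t|) := (pk'_cont (by linarith) hr1).abs
  have h1 : ∫ t in x..y, |pk' r t| ≤ ∫ t in (-(2*π))..(2*π), |pk' r t| :=
    integral_mono_interval_nonneg hcont (fun t => abs_nonneg _) hx hxy hy
  rw [int_two_periods hcont (abs_pk'_periodic r)] at h1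
  have h2 := int_abs_pk'_pi hr hr1
  have h3 : 34/(1-r) = 2*(17/(1-r)) := by ring
  linarith

theorem pk_diff_le (hr : 1/2 ≤ r) (hr1 : r < 1) {x y : ℝ} (hxy : x ≤ y) :
    |poissonKernelR r y - poissonKernelR r x| ≤ ∫ t in x..y, |pk' r t| := by
  have hftc : ∫ t in x..y, pk' r t = poissonKernelR r y - poissonKernelR r x :=
    integral_eq_sub_of_hasDerivAt (fun t _ => pk_hasDeriv (by linarith) hr1 t)
      ((pk'_cont (by linarith) hr1).intervalIntegrable _ _)
  rw [← hftc]
  exact intervalIntegral.abs_integral_le_integral_abs hxy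

theorem pk_lip (hr : 1/2 ≤ r) (hr1 : r < 1) (x y : ℝ) :
    |poissonKernelR r y - poissonKernelR r x| ≤ 2/(π*(1-r)^4) * |y - x| := by
  have hftc : ∫ t in x..y, pk' r t = poissonKernelR r y - poissonKernelR r x :=
    integral_eq_sub_of_hasDerivAt (fun t _ => pk_hasDeriv (by linarith) hr1 t)
      ((pk'_cont (by linarith) hr1).intervalIntegrable _ _)
  rw [← hftc, ← Real.norm_eq_abs]
  exact intervalIntegral.norm_integral_le_of_norm_le_const
    (fun t _ => by rw [Real.norm_eq_abs]; exact pk'_le hr hr1 t)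

end KernelInt

end PKAux


namespace PKAux

open HKAux intervalIntegral

theorem min_lip (u v : ℝ) : |min π u - min π v| ≤ |u - v| := by
  rcases le_total π u with hu | hu <;> rcases le_total π v with hv | hv
  · rw [min_eq_left hu, min_eq_left hv, sub_self, abs_zero]
    exact abs_nonneg _
  · rw [min_eq_left hu, min_eq_right hv, abs_of_nonneg (by linarith)]
    calc π - v ≤ u - v := by linarith
      _ ≤ |u - v| := le_abs_self _
  · rw [min_eq_right hu, min_eq_left hv, abs_of_nonpos (by linarith), neg_sub]
    calc π - u ≤ v - u := by linarith
      _ ≤ |u - v| := by rw [abs_sub_comm]; exact le_abs_self _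
  · rw [min_eq_right hu, min_eq_right hv]

theorem clamp_lip (u v : ℝ) :
    |max (-π) (min π u) - max (-π) (min π v)| ≤ |u - v| := by
  calc |max (-π) (min π u) - max (-π) (min π v)|
      = |max (min π u) (-π) - max (min π v) (-π)| := by rw [max_comm (-π) _, max_comm (-π) _]
    _ ≤ |min π u - min π v| := abs_max_sub_max_le_abs _ _ _
    _ ≤ |u - v| := min_lip u v

theorem approx_g {F : ℝ → ℝ} (hF : ContinuousOn F (Icc (-π) π)) {ε : ℝ} (hε : 0 < ε) :
    ∃ g : ℝ → ℝ, Continuous g ∧ (∃ M : ℝ, 0 ≤ M ∧ ∀ x, |g x| ≤ M) ∧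
      ∀ c ∈ Icc (-π) π, |(∫ x in (-π)..c, g x) - (F c - F (-π))| ≤ ε := by
  have hπ := Real.pi_pos
  have hππ : -π ≤ π := by linarith
  set cl : ℝ → ℝ := fun x => max (-π) (min π x) with hcl
  have hclcont : Continuous cl := continuous_const.max (continuous_const.min continuous_id)
  have hclmem : ∀ x, cl x ∈ Icc (-π) π :=
    fun x => ⟨le_max_left _ _, max_le hππ (min_le_left _ _)⟩
  have hcleq : ∀ c ∈ Icc (-π) π, cl c = c := by
    intro c hc
    rw [hcl]
    simp only
    rw [min_eq_right hc.2, max_eq_right hc.1]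
  have hFt : Continuous (fun x => F (cl x)) := hF.comp_continuous hclcont hclmem
  obtain ⟨η, hη, HUC⟩ := Metric.uniformContinuousOn_iff.mp
    (isCompact_Icc.uniformContinuousOn_of_continuous hF) (ε/2) (by linarith)
  set κ : ℝ := min (η/2) 1 with hκ
  have hκ0 : 0 < κ := lt_min (by linarith) one_pos
  have key : ∀ u v : ℝ, |u - v| ≤ κ → |F (cl u) - F (cl v)| ≤ ε/2 := by
    intro u v huv
    have hd : dist (cl u) (cl v) < η := by
      rw [Real.dist_eq]
      calc |cl u - cl v| ≤ |u - v| := clamp_lip u v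
        _ ≤ κ := huv
        _ ≤ η/2 := min_le_left _ _
        _ < η := by linarith
    have := HUC (cl u) (hclmem u) (cl v) (hclmem v) hd
    rw [Real.dist_eq] at this
    exact this.le
  refine ⟨fun x => (F (cl (x + κ)) - F (cl x))/κ, ?_, ⟨(ε/2)/κ, by positivity, ?_⟩, ?_⟩
  · exact ((hFt.comp (by fun_prop : Continuous fun x : ℝ => x + κ)).sub hFt).div_const κ
  · intro x
    rw [abs_div, abs_of_pos hκ0]
    gcongr
    exact key (x + κ) x (by rw [show x + κ - x = κ by ring, abs_of_pos hκ0])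
  · intro c hc
    have hint : ∀ u v : ℝ, IntervalIntegrable (fun x => F (cl x)) volume u v :=
      fun u v => hFt.intervalIntegrable u v
    have hshiftcont : Continuous (fun x => F (cl (x + κ))) :=
      hFt.comp (by fun_prop : Continuous fun x : ℝ => x + κ)
    have hsplit : ∫ x in (-π)..c, (F (cl (x + κ)) - F (cl x))/κ
        = ((∫ x in (-π)..c, F (cl (x + κ))) - ∫ x in (-π)..c, F (cl x))/κ := by
      rw [← intervalIntegral.integral_sub (hshiftcont.intervalIntegrable _ _) (hint _ _)]
      exact intervalIntegral.integral_div κ _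
    have hshift : ∫ x in (-π)..c, F (cl (x + κ)) = ∫ x in (-π+κ)..(c+κ), F (cl x) :=
      intervalIntegral.integral_comp_add_right (fun x => F (cl x)) κ
    have hadj1 : (∫ x in (-π+κ)..c, F (cl x)) + ∫ x in c..(c+κ), F (cl x)
        = ∫ x in (-π+κ)..(c+κ), F (cl x) :=
      integral_add_adjacent_intervals (hint _ _) (hint _ _)
    have hadj2 : (∫ x in (-π)..(-π+κ), F (cl x)) + ∫ x in (-π+κ)..c, F (cl x)
        = ∫ x in (-π)..c, F (cl x) :=
      integral_add_adjacent_intervals (hint _ _) (hint _ _)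
    have hbound1 : |(∫ x in c..(c+κ), F (cl x)) - κ * F c| ≤ ε/2 * κ := by
      have hconst : κ * F c = ∫ _ in c..(c+κ), F c := by
        rw [intervalIntegral.integral_const, smul_eq_mul, show c + κ - c = κ by ring]
      rw [hconst, ← intervalIntegral.integral_sub (hint _ _) intervalIntegrable_const]
      have hcc : F (cl c) = F c := by rw [hcleq c hc]
      have := intervalIntegral.norm_integral_le_of_norm_le_const
        (C := ε/2) (f := fun x => F (cl x) - F c) (a := c) (b := c + κ) ?_
      · rw [Real.norm_eq_abs] at this
        calc |∫ x in c..(c+κ), (F (cl x) - F c)| ≤ ε/2 * |c + κ - c| := this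
          _ = ε/2 * κ := by rw [show c + κ - c = κ by ring, abs_of_pos hκ0]
      · intro x hx
        rw [Set.uIoc_of_le (by linarith)] at hx
        rw [Real.norm_eq_abs, ← hcc]
        exact key x c (by rw [abs_of_nonneg (by linarith [hx.1.le, hx.2])]; linarith [hx.2])
    have hbound2 : |(∫ x in (-π)..(-π+κ), F (cl x)) - κ * F (-π)| ≤ ε/2 * κ := by
      have hconst : κ * F (-π) = ∫ _ in (-π)..(-π+κ), F (-π) := by
        rw [intervalIntegral.integral_const, smul_eq_mul, show -π + κ - -π = κ by ring]
      rw [hconst, ← intervalIntegral.integral_sub (hint _ _) intervalIntegrable_const]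
      have hcc : F (cl (-π)) = F (-π) := by rw [hcleq (-π) ⟨le_rfl, hππ⟩]
      have := intervalIntegral.norm_integral_le_of_norm_le_const
        (C := ε/2) (f := fun x => F (cl x) - F (-π)) (a := -π) (b := -π + κ) ?_
      · rw [Real.norm_eq_abs] at this
        calc |∫ x in (-π)..(-π+κ), (F (cl x) - F (-π))| ≤ ε/2 * |(-π) + κ - (-π)| := this
          _ = ε/2 * κ := by rw [show -π + κ - -π = κ by ring, abs_of_pos hκ0]
      · intro x hx
        rw [Set.uIoc_of_le (by linarith)] at hx
        rw [Real.norm_eq_abs, ← hcc]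
        exact key x (-π) (by rw [abs_of_nonneg (by linarith [hx.1.le])]; linarith [hx.2])
    have hFc : F (cl c) = F c := by rw [hcleq c hc]
    have hdiff : (∫ x in (-π)..c, (F (cl (x + κ)) - F (cl x))/κ) - (F c - F (-π))
        = (((∫ x in c..(c+κ), F (cl x)) - κ * F c)
          - ((∫ x in (-π)..(-π+κ), F (cl x)) - κ * F (-π)))/κ := by
      rw [hsplit, hshift]
      field_simp
      linarith [hadj1, hadj2]
    rw [hdiff]
    rw [abs_div, abs_of_pos hκ0]
    rw [div_le_iff₀ hκ0]
    calc |(∫ x in c..(c+κ), F (cl x)) - κ * F c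
          - ((∫ x in (-π)..(-π+κ), F (cl x)) - κ * F (-π))|
        ≤ |(∫ x in c..(c+κ), F (cl x)) - κ * F c|
          + |(∫ x in (-π)..(-π+κ), F (cl x)) - κ * F (-π)| := abs_sub _ _
      _ ≤ ε/2 * κ + ε/2 * κ := add_le_add hbound1 hbound2
      _ = ε * κ := by ring

end PKAux


namespace PKAux

open HKAux intervalIntegral Finset

set_option maxHeartbeats 1000000 in
theorem core {f : ℝ → ℝ} (hf : HKIntegrable f (-π) π) {ε : ℝ} (hε : 0 < ε) :
    ∃ r₀ : ℝ, r₀ < 1 ∧ ∀ r : ℝ, r₀ < r → 1/2 ≤ r → r < 1 →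
      ∀ θ ∈ Icc (-π) π, |poissonIntegral f r θ| ≤ ε/(1-r) := by
  have hπ := Real.pi_pos
  have hππ : -π ≤ π := by linarith
  have hFcont : ContinuousOn (fun c => hkIntegral f (-π) c) (Icc (-π) π) := cont_primitive hf
  obtain ⟨g, hgc, ⟨M, hM0, hgM⟩, hga⟩ := approx_g hFcont (show 0 < ε/1000 by linarith)
  refine ⟨max (1/2) (1 - ε/(1000*(M+1))), ?_, ?_⟩
  · apply max_lt (by norm_num)
    have : 0 < ε/(1000*(M+1)) := by positivity
    linarith
  intro r hr₀ hr hr1 θ hθ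
  have ha : 0 < 1 - r := by linarith
  have haM : 1 - r < ε/(1000*(M+1)) := by
    have := lt_of_le_of_lt (le_max_right (1/2) (1 - ε/(1000*(M+1)))) hr₀
    linarith
  have ha12 : 1 - r ≤ 1/2 := by linarith
  obtain ⟨If, hIf⟩ := hf
  have hgInt : HKIntegralEq g (-π) π (∫ x in (-π)..π, g x) := hk_of_continuous hgc hππ
  have hhInt : HKIntegrable (fun x => f x - g x) (-π) π :=
    ⟨If - ∫ x in (-π)..π, g x, hk_sub hIf hgInt⟩
  -- bound on hkIntegral of f - g on [-π, c]
  have hHb : ∀ c ∈ Icc (-π) π, |hkIntegral (fun x => f x - g x) (-π) c| ≤ ε/500 := by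
    intro c hc
    have hfc : HKIntegrable f (-π) c := hk_sub_interval le_rfl hc.1 hc.2 ⟨If, hIf⟩
    have hgc' : HKIntegralEq g (-π) c (∫ x in (-π)..c, g x) := hk_of_continuous hgc hc.1
    have hsub : HKIntegralEq (fun x => f x - g x) (-π) c
        (hkIntegral f (-π) c - ∫ x in (-π)..c, g x) := hk_sub (hkIntegral_spec hfc) hgc'
    rw [hk_eq hc.1 hsub]
    have hF0 : hkIntegral f (-π) (-π) = 0 := hk_eq le_rfl (hkIntegralEq_self f (-π))
    have h2 : |(∫ x in (-π)..c, g x) - (hkIntegral f (-π) c - hkIntegral f (-π) (-π))|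
        ≤ ε/1000 := hga c hc
    rw [hF0, sub_zero, abs_sub_comm] at h2
    linarith
  rw [poissonIntegral]
  by_cases hPI : HKIntegrable (fun φ => f φ * poissonKernelR r (φ - θ)) (-π) π
  swap
  · rw [hkIntegral, dif_neg hPI, abs_zero]
    exact (div_pos hε ha).le
  obtain ⟨δ1, hδ1pos, Hδ1⟩ := hkIntegralEq_iff.mp (hkIntegral_spec hPI)
    ((1-r)*ε/1000) (by positivity)
  obtain ⟨δ2, hδ2pos, Hδ2⟩ := hkIntegralEq_iff.mp (hkIntegral_spec hhInt)
    ((1-r)*ε/1000) (by positivity)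
  set δ0 : ℝ := (1-r)^4/8 with hδ0
  have hδ0pos : 0 < δ0 := by rw [hδ0]; positivity
  set δ : ℝ → ℝ := fun x => min (min (δ1 x) (δ2 x)) δ0 with hδdef
  have hδpos : ∀ x, 0 < δ x := fun x => lt_min (lt_min (hδ1pos x) (hδ2pos x)) hδ0pos
  obtain ⟨n, t, ξ, hTP⟩ := cousin hδpos hππ
  have hn0 : 0 < n := by
    rcases Nat.eq_zero_or_pos n with rfl | h
    · exfalso
      have h0 := hTP.h0
      have hn := hTP.hn
      rw [h0] at hn
      linarith
    · exact h
  have hδle1 : ∀ x, δ x ≤ δ1 x := fun x => (min_le_left _ _).trans (min_le_left _ _)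
  have hδle2 : ∀ x, δ x ≤ δ2 x := fun x => (min_le_left _ _).trans (min_le_right _ _)
  have hδle0 : ∀ x, δ x ≤ δ0 := fun x => min_le_right _ _
  have e1 := Hδ1 n t ξ (hTP.mono_gauge hδle1)
  have hcontθ : Continuous (fun x : ℝ => poissonKernelR r (x - θ)) :=
    (pk_cont (by linarith) hr1).comp (by fun_prop)
  have hLnn : (0:ℝ) ≤ 2/(π*(1-r)^4) := by positivity
  -- kernel Riemann sum bound
  have hksum : ∑ i ∈ Finset.range n, poissonKernelR r (ξ i - θ) * (t (i+1) - t i) ≤ 11 := by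
    have hterm : ∀ i ∈ Finset.range n, poissonKernelR r (ξ i - θ) * (t (i+1) - t i)
        ≤ (∫ x in t i..t (i+1), poissonKernelR r (x - θ))
          + (2/(π*(1-r)^4)) * (2*δ0) * (t (i+1) - t i) := by
      intro i hi
      rw [Finset.mem_range] at hi
      have hmono := hTP.mono i hi
      have htag := hTP.tag i hi
      have hfine := hTP.fine i hi
      have hΔ2 : t (i+1) - t i ≤ 2*δ0 := by
        have h1 := hfine.1
        have h2 := hfine.2
        have h3 := hδle0 (ξ i)
        linarith
      have hconst : poissonKernelR r (ξ i - θ) * (t (i+1) - t i)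
          = ∫ _ in t i..t (i+1), poissonKernelR r (ξ i - θ) := by
        rw [intervalIntegral.integral_const, smul_eq_mul]; ring
      have hsub : ∫ x in t i..t (i+1),
            (poissonKernelR r (ξ i - θ) - poissonKernelR r (x - θ))
          = (∫ _ in t i..t (i+1), poissonKernelR r (ξ i - θ))
            - ∫ x in t i..t (i+1), poissonKernelR r (x - θ) :=
        integral_sub intervalIntegrable_const (hcontθ.intervalIntegrable _ _)
      have hptw : ∀ x ∈ Set.uIoc (t i) (t (i+1)),
          ‖poissonKernelR r (ξ i - θ) - poissonKernelR r (x - θ)‖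
            ≤ (2/(π*(1-r)^4)) * (2*δ0) := by
        intro x hx
        rw [Set.uIoc_of_le hmono] at hx
        rw [Real.norm_eq_abs]
        calc |poissonKernelR r (ξ i - θ) - poissonKernelR r (x - θ)|
            ≤ 2/(π*(1-r)^4) * |(ξ i - θ) - (x - θ)| := pk_lip hr hr1 (x - θ) (ξ i - θ)
          _ ≤ (2/(π*(1-r)^4)) * (2*δ0) := by
              apply mul_le_mul_of_nonneg_left _ hLnn
              rw [abs_le]
              constructor
              · have := hx.2; have := htag.1; linarith [hx.1.le]
              · have := hx.1.le; have := htag.2; linarith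
      have hni := intervalIntegral.norm_integral_le_of_norm_le_const hptw
      rw [Real.norm_eq_abs, hsub] at hni
      have habs : |t (i+1) - t i| = t (i+1) - t i := abs_of_nonneg (by linarith)
      rw [habs] at hni
      have := abs_le.mp hni
      rw [hconst]
      linarith [this.2]
    calc ∑ i ∈ Finset.range n, poissonKernelR r (ξ i - θ) * (t (i+1) - t i)
        ≤ ∑ i ∈ Finset.range n, ((∫ x in t i..t (i+1), poissonKernelR r (x - θ))
            + (2/(π*(1-r)^4)) * (2*δ0) * (t (i+1) - t i)) := Finset.sum_le_sum hterm
      _ = (∑ i ∈ Finset.range n, ∫ x in t i..t (i+1), poissonKernelR r (x - θ))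
            + (2/(π*(1-r)^4)) * (2*δ0) * ∑ i ∈ Finset.range n, (t (i+1) - t i) := by
          rw [Finset.sum_add_distrib, Finset.mul_sum]
      _ = (∫ x in (-π)..π, poissonKernelR r (x - θ))
            + (2/(π*(1-r)^4)) * (2*δ0) * (2*π) := by
          rw [intervalIntegral.sum_integral_adjacent_intervals
            (fun k _ => hcontθ.intervalIntegrable _ _), hTP.h0, hTP.hn,
            Finset.sum_range_sub, hTP.h0, hTP.hn]
          congr 1
          ring
      _ ≤ 10 + 1 := by
          have hshift : ∫ x in (-π)..π, poissonKernelR r (x - θ)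
              = ∫ x in (-π - θ)..(π - θ), poissonKernelR r x :=
            intervalIntegral.integral_comp_sub_right (poissonKernelR r) θ
          have hb : ∫ x in (-π - θ)..(π - θ), poissonKernelR r x ≤ 10 :=
            int_pk_le hr hr1 (by linarith [hθ.2]) (by linarith) (by linarith [hθ.1])
          have heq1 : (2/(π*(1-r)^4)) * (2*δ0) * (2*π) = 1 := by
            rw [hδ0]
            field_simp
            ring
          rw [hshift, heq1]
          linarith
      _ = 11 := by norm_num
  -- g part
  have hgpart : |RS (fun x => g x * poissonKernelR r (x - θ)) n t ξ| ≤ M * 11 := by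
    have habs : ∀ i ∈ Finset.range n,
        |(fun x => g x * poissonKernelR r (x - θ)) (ξ i) * (t (i+1) - t i)|
          ≤ M * (poissonKernelR r (ξ i - θ) * (t (i+1) - t i)) := by
      intro i hi
      rw [Finset.mem_range] at hi
      have hΔnn : 0 ≤ t (i+1) - t i := by linarith [hTP.mono i hi]
      have hpk := pk_pos hr hr1 (ξ i - θ)
      simp only
      rw [abs_mul, abs_mul, abs_of_pos hpk, abs_of_nonneg hΔnn]
      calc |g (ξ i)| * poissonKernelR r (ξ i - θ) * (t (i+1) - t i)
          ≤ M * poissonKernelR r (ξ i - θ) * (t (i+1) - t i) := by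
            apply mul_le_mul_of_nonneg_right _ hΔnn
            exact mul_le_mul_of_nonneg_right (hgM (ξ i)) hpk.le
        _ = M * (poissonKernelR r (ξ i - θ) * (t (i+1) - t i)) := by ring
    calc |RS (fun x => g x * poissonKernelR r (x - θ)) n t ξ|
        ≤ ∑ i ∈ Finset.range n,
            |(fun x => g x * poissonKernelR r (x - θ)) (ξ i) * (t (i+1) - t i)| :=
          Finset.abs_sum_le_sum_abs _ _
      _ ≤ ∑ i ∈ Finset.range n, M * (poissonKernelR r (ξ i - θ) * (t (i+1) - t i)) :=
          Finset.sum_le_sum habs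
      _ = M * ∑ i ∈ Finset.range n, poissonKernelR r (ξ i - θ) * (t (i+1) - t i) := by
          rw [Finset.mul_sum]
      _ ≤ M * 11 := mul_le_mul_of_nonneg_left hksum hM0
  -- h part (Abel summation)
  set E : ℝ := ε/500 + 2*((1-r)*ε/1000) with hE
  have hEnn : 0 ≤ E := by rw [hE]; positivity
  have hhpart : |RS (fun x => (f x - g x) * poissonKernelR r (x - θ)) n t ξ|
      ≤ E * (35/(1-r)) := by
    set γ : ℕ → ℝ := fun i => poissonKernelR r (ξ i - θ) with hγ
    set bb : ℕ → ℝ := fun i => (f (ξ i) - g (ξ i)) * (t (i+1) - t i) with hbb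
    have hRSeq : RS (fun x => (f x - g x) * poissonKernelR r (x - θ)) n t ξ
        = ∑ i ∈ Finset.range n, γ i * bb i := by
      unfold RS
      exact Finset.sum_congr rfl (fun i _ => by rw [hγ, hbb]; ring)
    have hAk : ∀ k, k ≤ n → |∑ j ∈ Finset.range k, bb j| ≤ E := by
      intro k hk
      have hδw : ∀ n' t' ξ', TP (-π) π δ n' t' ξ' →
          |RS (fun x => f x - g x) n' t' ξ' - hkIntegral (fun x => f x - g x) (-π) π|
            < (1-r)*ε/1000 :=
        fun n' t' ξ' hT' => Hδ2 n' t' ξ' (hT'.mono_gauge hδle2)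
      have hpre := prefix_est hhInt hδpos (by positivity) hδw hTP hk
      have hRSk : RS (fun x => f x - g x) k t ξ = ∑ j ∈ Finset.range k, bb j := rfl
      rw [hRSk] at hpre
      have hmem := hTP.t_mem hk
      have hH := hHb (t k) ⟨hmem.1, hmem.2⟩
      rw [hE]
      have h1 := abs_le.mp hpre
      have h2 := abs_le.mp hH
      rw [abs_le]
      constructor <;> linarith
    have hVar : ∑ i ∈ Finset.range (n-1), |γ (i+1) - γ i| ≤ 34/(1-r) := by
      have hterm : ∀ i ∈ Finset.range (n-1), |γ (i+1) - γ i|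
          ≤ ∫ s in (ξ i - θ)..(ξ (i+1) - θ), |pk' r s| := by
        intro i hi
        rw [Finset.mem_range] at hi
        have hξmono : ξ i ≤ ξ (i+1) := hTP.tag_mono (Nat.lt_succ_self i) (by omega)
        exact pk_diff_le hr hr1 (by linarith)
      have hadj : ∑ i ∈ Finset.range (n-1), ∫ s in (ξ i - θ)..(ξ (i+1) - θ), |pk' r s|
          = ∫ s in (ξ 0 - θ)..(ξ (n-1) - θ), |pk' r s| := by
        exact intervalIntegral.sum_integral_adjacent_intervals
          (fun k _ => ((pk'_cont (by linarith) hr1).abs).intervalIntegrable _ _)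
      have hξ0 := hTP.tag_mem hn0
      have hξn := hTP.tag_mem (by omega : n - 1 < n)
      have hξ0n : ξ 0 ≤ ξ (n-1) := by
        rcases Nat.eq_or_lt_of_le (by omega : 0 ≤ n-1) with h | h
        · rw [← h]
        · exact hTP.tag_mono h (by omega)
      have hbnd : ∫ s in (ξ 0 - θ)..(ξ (n-1) - θ), |pk' r s| ≤ 34/(1-r) :=
        int_abs_pk'_le hr hr1 (by linarith [hξ0.1, hθ.2]) (by linarith)
          (by linarith [hξn.2, hθ.1])
      calc ∑ i ∈ Finset.range (n-1), |γ (i+1) - γ i|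
          ≤ ∑ i ∈ Finset.range (n-1), ∫ s in (ξ i - θ)..(ξ (i+1) - θ), |pk' r s| :=
            Finset.sum_le_sum hterm
        _ ≤ 34/(1-r) := by rw [hadj]; exact hbnd
    have hγmax : |γ (n-1)| ≤ 1/(1-r) := by
      rw [hγ]
      simp only
      rw [abs_of_pos (pk_pos hr hr1 _)]
      calc poissonKernelR r (ξ (n-1) - θ) ≤ 1/(π*(1-r)) := pk_le hr hr1 _
        _ ≤ 1/(1-r) := by
            apply one_div_le_one_div_of_le ha
            nlinarith [Real.pi_gt_three]
    have habel := Finset.sum_range_by_parts γ bb n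
    simp only [smul_eq_mul] at habel
    rw [hRSeq, habel]
    have hb1 : |γ (n-1) * ∑ i ∈ Finset.range n, bb i| ≤ (1/(1-r)) * E := by
      rw [abs_mul]
      exact mul_le_mul hγmax (hAk n le_rfl) (abs_nonneg _) (by positivity)
    have hb2 : |∑ i ∈ Finset.range (n-1), (γ (i+1) - γ i) * ∑ j ∈ Finset.range (i+1), bb j|
        ≤ (34/(1-r)) * E := by
      calc |∑ i ∈ Finset.range (n-1), (γ (i+1) - γ i) * ∑ j ∈ Finset.range (i+1), bb j|
          ≤ ∑ i ∈ Finset.range (n-1), |(γ (i+1) - γ i) * ∑ j ∈ Finset.range (i+1), bb j| :=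
            Finset.abs_sum_le_sum_abs _ _
        _ ≤ ∑ i ∈ Finset.range (n-1), |γ (i+1) - γ i| * E := by
            apply Finset.sum_le_sum
            intro i hi
            rw [Finset.mem_range] at hi
            rw [abs_mul]
            exact mul_le_mul_of_nonneg_left (hAk (i+1) (by omega)) (abs_nonneg _)
        _ = (∑ i ∈ Finset.range (n-1), |γ (i+1) - γ i|) * E := by rw [Finset.sum_mul]
        _ ≤ (34/(1-r)) * E := mul_le_mul_of_nonneg_right hVar hEnn
    calc |γ (n-1) * ∑ i ∈ Finset.range n, bb i
          - ∑ i ∈ Finset.range (n-1), (γ (i+1) - γ i) * ∑ j ∈ Finset.range (i+1), bb j|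
        ≤ |γ (n-1) * ∑ i ∈ Finset.range n, bb i|
          + |∑ i ∈ Finset.range (n-1), (γ (i+1) - γ i) * ∑ j ∈ Finset.range (i+1), bb j| :=
          abs_sub _ _
      _ ≤ (1/(1-r)) * E + (34/(1-r)) * E := add_le_add hb1 hb2
      _ = E * (35/(1-r)) := by ring
  -- combine
  have hsplitRS : RS (fun φ => f φ * poissonKernelR r (φ - θ)) n t ξ
      = RS (fun x => g x * poissonKernelR r (x - θ)) n t ξ
        + RS (fun x => (f x - g x) * poissonKernelR r (x - θ)) n t ξ := by
    unfold RS
    rw [← Finset.sum_add_distrib]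
    exact Finset.sum_congr rfl (fun i _ => by ring)
  have hIb : |hkIntegral (fun φ => f φ * poissonKernelR r (φ - θ)) (-π) π|
      ≤ (1-r)*ε/1000 + M * 11 + E * (35/(1-r)) := by
    have e1' := abs_lt.mp e1
    rw [hsplitRS] at e1'
    have hg' := abs_le.mp hgpart
    have hh' := abs_le.mp hhpart
    rw [abs_le]
    constructor <;> linarith [e1'.1, e1'.2, hg'.1, hg'.2, hh'.1, hh'.2]
  rw [le_div_iff₀ ha]
  have hane : (1-r) ≠ 0 := ne_of_gt ha
  calc |hkIntegral (fun φ => f φ * poissonKernelR r (φ - θ)) (-π) π| * (1-r)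
      ≤ ((1-r)*ε/1000 + M * 11 + E * (35/(1-r))) * (1-r) :=
        mul_le_mul_of_nonneg_right hIb ha.le
    _ = (1-r)*(1-r)*ε/1000 + 11*(M*(1-r)) + 35*E := by
        field_simp
    _ ≤ ε := by
        have hMb : M * (1-r) ≤ ε/1000 := by
          have h1 : M * (1-r) ≤ M * (ε/(1000*(M+1))) :=
            mul_le_mul_of_nonneg_left haM.le hM0
          have h2 : M * (ε/(1000*(M+1))) ≤ ε/1000 := by
            have hM1 : (0:ℝ) < M + 1 := by linarith
            have heq2 : M * (ε/(1000*(M+1))) = (M/(M+1)) * (ε/1000) := by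
              rw [mul_div_assoc', div_mul_div_comm, mul_comm (1000:ℝ) (M+1)]
            rw [heq2]
            have hfr : M/(M+1) ≤ 1 := by rw [div_le_one hM1]; linarith
            calc (M/(M+1)) * (ε/1000) ≤ 1 * (ε/1000) :=
                  mul_le_mul_of_nonneg_right hfr (by positivity)
              _ = ε/1000 := by ring
          linarith
        have hEb : E ≤ ε/500 + ε/1000 := by
          rw [hE]
          nlinarith
        have hsq : (1-r)*(1-r)*ε/1000 ≤ ε/1000 := by
          have h3 : (1-r)*(1-r) ≤ 1 := by nlinarith
          have h4 : 0 ≤ ε/1000 := by positivity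
          calc (1-r)*(1-r)*ε/1000 = ((1-r)*(1-r)) * (ε/1000) := by ring
            _ ≤ 1 * (ε/1000) := mul_le_mul_of_nonneg_right h3 h4
            _ = ε/1000 := by ring
        linarith

end PKAux


namespace PKAux

open intervalIntegral

theorem lp_bound {p : ℝ} (hp : 1 ≤ p) (u : ℝ → ℝ) {B : ℝ} (hB : 0 ≤ B)
    (hu : ∀ θ ∈ Icc (-π) π, |u θ| ≤ B) : 0 ≤ lpNorm p u ∧ lpNorm p u ≤ 7 * B := by
  have hπ := Real.pi_pos
  have hp0 : (0:ℝ) < p := by linarith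
  have hip : (0:ℝ) < 1/p := by positivity
  by_cases hi : IntervalIntegrable (fun θ => |u θ|^p) volume (-π) π
  · have hJ0 : 0 ≤ ∫ θ in (-π)..π, |u θ|^p :=
      intervalIntegral.integral_nonneg (by linarith)
        (fun x _ => Real.rpow_nonneg (abs_nonneg _) p)
    have hmono : ∫ θ in (-π)..π, |u θ|^p ≤ ∫ θ in (-π)..π, B^p :=
      intervalIntegral.integral_mono_on (by linarith) hi intervalIntegrable_const
        (fun x hx => Real.rpow_le_rpow (abs_nonneg _) (hu x hx) hp0.le)
    have hconst : ∫ _ in (-π)..π, B^p = (2*π) * B^p := by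
      rw [intervalIntegral.integral_const, smul_eq_mul]
      ring
    constructor
    · exact Real.rpow_nonneg hJ0 _
    · rw [_root_.lpNorm]
      calc (∫ θ in (-π)..π, |u θ|^p)^(1/p) ≤ ((2*π) * B^p)^(1/p) :=
            Real.rpow_le_rpow hJ0 (hmono.trans_eq hconst) hip.le
        _ = (2*π)^(1/p) * (B^p)^(1/p) :=
            Real.mul_rpow (by positivity) (Real.rpow_nonneg hB p)
        _ = (2*π)^(1/p) * B := by
            rw [← Real.rpow_mul hB, mul_one_div_cancel (ne_of_gt hp0), Real.rpow_one]
        _ ≤ (2*π)^(1:ℝ) * B := by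
            apply mul_le_mul_of_nonneg_right _ hB
            apply Real.rpow_le_rpow_of_exponent_le (by nlinarith [Real.pi_gt_three])
            rw [div_le_one hp0]
            linarith
        _ = 2*π*B := by rw [Real.rpow_one]
        _ ≤ 7*B := by nlinarith [Real.pi_lt_d2, hB]
  · rw [_root_.lpNorm, intervalIntegral.integral_undef hi, Real.zero_rpow (ne_of_gt hip)]
    constructor
    · exact le_rfl
    · positivity

end PKAux

/-- For `1 ≤ p < ∞` and `f` 2π-periodic, Henstock–Kurzweil integrable
on `[-π,π]`, one has `‖u_r‖_p = o(1/(1-r))` as `r → 1⁻`. -/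
theorem poisson_lp_little_o (p : ℝ) (hp : 1 ≤ p) (f : ℝ → ℝ)
    (hper : Function.Periodic f (2 * π)) (hf : HKIntegrable f (-π) π) :
    Tendsto (fun r : ℝ => (1 - r) * lpNorm p (fun θ => poissonIntegral f r θ))
      (𝓝[<] 1) (𝓝 0) := by
  rw [Metric.tendsto_nhds]
  intro ε hε
  obtain ⟨r₀, hr₀1, Hcore⟩ := PKAux.core hf (show 0 < ε/15 by linarith)
  have hmax1 : max r₀ (1/2) < 1 := max_lt hr₀1 (by norm_num)
  filter_upwards [Ioo_mem_nhdsLT_of_mem (⟨hmax1, le_rfl⟩ : (1:ℝ) ∈ Ioc (max r₀ (1/2)) 1)]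
    with r hrIoo
  have hrr0 : r₀ < r := lt_of_le_of_lt (le_max_left _ _) hrIoo.1
  have hr12 : (1:ℝ)/2 ≤ r := le_of_lt (lt_of_le_of_lt (le_max_right _ _) hrIoo.1)
  have hr1 : r < 1 := hrIoo.2
  have ha : 0 < 1 - r := by linarith
  have hB := Hcore r hrr0 hr12 hr1
  obtain ⟨h0, h1⟩ := PKAux.lp_bound hp (fun θ => poissonIntegral f r θ)
    (B := (ε/15)/(1-r)) (div_nonneg (by linarith) ha.le) hB
  rw [Real.dist_eq, sub_zero, abs_of_nonneg (mul_nonneg ha.le h0)]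
  have h2 : (1 - r) * lpNorm p (fun θ => poissonIntegral f r θ)
      ≤ (1-r) * (7 * ((ε/15)/(1-r))) := mul_le_mul_of_nonneg_left h1 ha.le
  have heq : (1-r) * (7 * ((ε/15)/(1-r))) = 7*ε/15 := by
    field_simp
  rw [heq] at h2
  linarith
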